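/- A ring R is right Noetherian if and only if the module PI = ∏_{S∈Γ} S⁺ (the product of character modules of a complete set of representatives of finitely presented left R-modules) is an indigent right R-module. -/

import Mathlib

universe u

open LinearMap MulOpposite

/-! Character module -/

/-- The character group `M⁺ = Hom_ℤ(M, ℚ/ℤ)`. -/
abbrev CharMod (M : Type u) [AddCommGroup M] : Type u := M →+ AddCircle (1 : ℚ)

/-- If `M` is a left `S`-module, then `M⁺` is a right `S`-module via `(f • r) m = f (r • m)`. -/
instance CharMod.moduleRight (S : Type u) [Ring S] (M : Type u) [AddCommGroup M]
    [Module S M] : Module Sᵐᵒᵖ (CharMod M) where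
  smul r f := f.comp (DistribMulAction.toAddMonoidHom M (unop r))
  one_smul f := by
    apply AddMonoidHom.ext; intro m
    show f ((unop (1 : Sᵐᵒᵖ)) • m) = f m
    simp
  mul_smul r s f := by
    apply AddMonoidHom.ext; intro m
    show f ((unop (r * s)) • m) = f ((unop s) • ((unop r) • m))
    simp [mul_smul]
  smul_zero r := by apply AddMonoidHom.ext; intro m; rfl
  smul_add r f g := by apply AddMonoidHom.ext; intro m; rfl
  add_smul r s f := by
    apply AddMonoidHom.ext; intro m
    show f ((unop (r + s)) • m) = f ((unop r) • m) + f ((unop s) • m)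
    rw [unop_add, add_smul, map_add]
  zero_smul f := by
    apply AddMonoidHom.ext; intro m
    show f ((unop (0 : Sᵐᵒᵖ)) • m) = 0
    simp

/-- If `M` is a right `S`-module, then `M⁺` is a left `S`-module via `(r • f) m = f (m • r)`. -/
instance CharMod.moduleLeft (S : Type u) [Ring S] (M : Type u) [AddCommGroup M]
    [Module Sᵐᵒᵖ M] : Module S (CharMod M) where
  smul r f := f.comp (DistribMulAction.toAddMonoidHom M (op r))
  one_smul f := by
    apply AddMonoidHom.ext; intro m
    show f ((op (1 : S)) • m) = f m
    simp
  mul_smul r s f := by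
    apply AddMonoidHom.ext; intro m
    show f ((op (r * s)) • m) = f ((op s) • ((op r) • m))
    rw [← mul_smul, ← op_mul]
  smul_zero r := by apply AddMonoidHom.ext; intro m; rfl
  smul_add r f g := by apply AddMonoidHom.ext; intro m; rfl
  add_smul r s f := by
    apply AddMonoidHom.ext; intro m
    show f ((op (r + s)) • m) = f ((op r) • m) + f ((op s) • m)
    rw [op_add, add_smul, map_add]
  zero_smul f := by
    apply AddMonoidHom.ext; intro m
    show f ((op (0 : S)) • m) = 0
    simp

/-! Tensor product of a right module and a left module over a (possibly noncommutative) ring -/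

section Tensor

variable (S : Type u) [Ring S]

/-- The bilinearity relations defining `M ⊗_S N` as a quotient of `M ⊗_ℤ N`. -/
def tensorRel (M N : Type u) [AddCommGroup M] [Module Sᵐᵒᵖ M] [AddCommGroup N] [Module S N] :
    Submodule ℤ (TensorProduct ℤ M N) :=
  Submodule.span ℤ {x | ∃ (m : M) (r : S) (n : N),
    x = (op r • m) ⊗ₜ[ℤ] n - m ⊗ₜ[ℤ] (r • n)}

/-- `M ⊗_S N` for a right `S`-module `M` and a left `S`-module `N`. -/
def RTensor (M N : Type u) [AddCommGroup M] [Module Sᵐᵒᵖ M] [AddCommGroup N] [Module S N] :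
    Type u := TensorProduct ℤ M N ⧸ tensorRel S M N

noncomputable instance (M N : Type u) [AddCommGroup M] [Module Sᵐᵒᵖ M] [AddCommGroup N] [Module S N] :
    AddCommGroup (RTensor S M N) :=
  inferInstanceAs (AddCommGroup (TensorProduct ℤ M N ⧸ tensorRel S M N))

/-- Functoriality of `M ⊗_S -` in the left-module variable. -/
noncomputable def rTensorMap (M : Type u) [AddCommGroup M] [Module Sᵐᵒᵖ M] {N B : Type u}
    [AddCommGroup N] [Module S N] [AddCommGroup B] [Module S B] (g : N →ₗ[S] B) :
    RTensor S M N →ₗ[ℤ] RTensor S M B :=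
  Submodule.mapQ _ _ (TensorProduct.map LinearMap.id g.toAddMonoidHom.toIntLinearMap)
    (by
      rw [tensorRel, Submodule.span_le]
      rintro x ⟨m, r, n, rfl⟩
      refine Submodule.mem_comap.mpr ?_
      erw [map_sub, TensorProduct.map_tmul, TensorProduct.map_tmul]
      simp only [LinearMap.id_apply, AddMonoidHom.coe_toIntLinearMap, LinearMap.toAddMonoidHom_coe]
      rw [map_smul]
      exact Submodule.subset_span ⟨m, r, g n, rfl⟩)

/-- Functoriality of `- ⊗_S N` in the right-module variable. -/
noncomputable def lTensorMap {M B : Type u} [AddCommGroup M] [Module Sᵐᵒᵖ M] [AddCommGroup B]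
    [Module Sᵐᵒᵖ B] (h : M →ₗ[Sᵐᵒᵖ] B) (N : Type u) [AddCommGroup N] [Module S N] :
    RTensor S M N →ₗ[ℤ] RTensor S B N :=
  Submodule.mapQ _ _ (TensorProduct.map h.toAddMonoidHom.toIntLinearMap LinearMap.id)
    (by
      rw [tensorRel, Submodule.span_le]
      rintro x ⟨m, r, n, rfl⟩
      refine Submodule.mem_comap.mpr ?_
      erw [map_sub, TensorProduct.map_tmul, TensorProduct.map_tmul]
      simp only [LinearMap.id_apply, AddMonoidHom.coe_toIntLinearMap, LinearMap.toAddMonoidHom_coe]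
      rw [map_smul]
      exact Submodule.subset_span ⟨h m, r, n, rfl⟩)

end Tensor

/-! Basic relative homological notions -/

section Defs

variable (S : Type u) [Ring S]

/-- `M` is `N`-subinjective: every map `N → M` extends along every embedding of `N`. -/
def Subinjective (N M : Type u) [AddCommGroup N] [Module S N] [AddCommGroup M]
    [Module S M] : Prop :=
  ∀ (K : Type u) [AddCommGroup K] [Module S K] (i : N →ₗ[S] K), Function.Injective i →
    ∀ f : N →ₗ[S] M, ∃ h : K →ₗ[S] M, h ∘ₗ i = f

/-- `M` is an injective module. -/
def InjMod (M : Type u) [AddCommGroup M] [Module S M] : Prop :=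
  ∀ (N : Type u) [AddCommGroup N] [Module S N], Subinjective S N M

/-- `M` is `N`-subprojective. -/
def Subprojective (M N : Type u) [AddCommGroup M] [Module S M] [AddCommGroup N]
    [Module S N] : Prop :=
  ∀ (B : Type u) [AddCommGroup B] [Module S B] (g : B →ₗ[S] N), Function.Surjective g →
    ∀ f : M →ₗ[S] N, ∃ h : M →ₗ[S] B, g ∘ₗ h = f

/-- A monomorphism of left `S`-modules is pure if it stays injective after
tensoring with any right `S`-module. -/
def IsPureMono {A B : Type u} [AddCommGroup A] [Module S A] [AddCommGroup B] [Module S B]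
    (i : A →ₗ[S] B) : Prop :=
  Function.Injective i ∧
    ∀ (M : Type u) [AddCommGroup M] [Module Sᵐᵒᵖ M], Function.Injective (rTensorMap S M i)

/-- `N` is absolutely pure (fp-injective): every embedding of `N` is pure. -/
def AbsPure (N : Type u) [AddCommGroup N] [Module S N] : Prop :=
  ∀ (K : Type u) [AddCommGroup K] [Module S K] (i : N →ₗ[S] K), Function.Injective i →
    IsPureMono S i

/-- `N` is absolutely `M`-pure, for a right module `M`. -/
def AbsMPure (M : Type u) [AddCommGroup M] [Module Sᵐᵒᵖ M] (N : Type u) [AddCommGroup N]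
    [Module S N] : Prop :=
  ∀ (B : Type u) [AddCommGroup B] [Module S B] (i : N →ₗ[S] B), Function.Injective i →
    Function.Injective (rTensorMap S M i)

/-- `M` is pure-injective: maps into `M` extend along pure monomorphisms. -/
def PureInjective (M : Type u) [AddCommGroup M] [Module S M] : Prop :=
  ∀ (A B : Type u) [AddCommGroup A] [Module S A] [AddCommGroup B] [Module S B]
    (i : A →ₗ[S] B), IsPureMono S i → ∀ f : A →ₗ[S] M, ∃ h : B →ₗ[S] M, h ∘ₗ i = f

/-- `M` is indigent: its subinjectivity domain is exactly the injective modules. -/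
def Indigent (M : Type u) [AddCommGroup M] [Module S M] : Prop :=
  ∀ (N : Type u) [AddCommGroup N] [Module S N], Subinjective S N M ↔ InjMod S N

/-- `M` is pi-indigent: `M` is pure-injective and its subinjectivity domain is exactly
the absolutely pure modules. -/
def PiIndigent (M : Type u) [AddCommGroup M] [Module S M] : Prop :=
  PureInjective S M ∧
    ∀ (N : Type u) [AddCommGroup N] [Module S N], Subinjective S N M ↔ AbsPure S N

/-- Flatness via the equational criterion. -/
def FlatMod (M : Type u) [AddCommGroup M] [Module S M] : Prop :=
  ∀ (n : ℕ) (r : Fin n → S) (x : Fin n → M), (∑ i, r i • x i) = 0 →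
    ∃ (m : ℕ) (a : Fin n → Fin m → S) (y : Fin m → M),
      (∀ i, x i = ∑ j, a i j • y j) ∧ ∀ j, (∑ i, r i * a i j) = 0

/-- Finitely presented module. -/
def FPMod (M : Type u) [AddCommGroup M] [Module S M] : Prop :=
  ∃ (n : ℕ) (K : Submodule S (Fin n → S)), K.FG ∧
    Nonempty ((((Fin n → S)) ⧸ K) ≃ₗ[S] M)

/-- `Ext¹_S(M, N) = 0`, expressed by the splitting of every extension of `N` by `M`. -/
def ExtVanish (M N : Type u) [AddCommGroup M] [Module S M] [AddCommGroup N] [Module S N] :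
    Prop :=
  ∀ (B : Type u) [AddCommGroup B] [Module S B] (i : N →ₗ[S] B) (p : B →ₗ[S] M),
    Function.Injective i → Function.Surjective p → LinearMap.range i = LinearMap.ker p →
      ∃ s : M →ₗ[S] B, p ∘ₗ s = LinearMap.id

/-- `Tor₁^S(N, T) = 0` for a right module `N` and a left module `T`. -/
def TorVanish (N : Type u) [AddCommGroup N] [Module Sᵐᵒᵖ N] (T : Type u) [AddCommGroup T]
    [Module S T] : Prop :=
  ∀ (P K : Type u) [AddCommGroup P] [Module Sᵐᵒᵖ P] [AddCommGroup K] [Module Sᵐᵒᵖ K]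
    (i : K →ₗ[Sᵐᵒᵖ] P) (p : P →ₗ[Sᵐᵒᵖ] N), Module.Projective Sᵐᵒᵖ P →
      Function.Injective i → Function.Surjective p →
        LinearMap.range i = LinearMap.ker p → Function.Injective (lTensorMap S i T)

/-- `M` is a Whitehead test module for injectivity (i-test). -/
def ITest (M : Type u) [AddCommGroup M] [Module S M] : Prop :=
  ∀ (N : Type u) [AddCommGroup N] [Module S N], ExtVanish S M N → InjMod S N

/-- `S` is (left) n-saturated: `S` is not semisimple and every finitely generated
non-projective module is i-test. -/
def NSaturated : Prop :=
  ¬ IsSemisimpleRing S ∧ ∀ (M : Type u) [AddCommGroup M] [Module S M],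
    Module.Finite S M → ¬ Module.Projective S M → ITest S M

/-- A submodule is essential if it intersects every nonzero submodule nontrivially. -/
def EssentialIn {M : Type u} [AddCommGroup M] [Module S M] (A : Submodule S M) : Prop :=
  ∀ B : Submodule S M, B ≠ ⊥ → A ⊓ B ≠ ⊥

/-- `M` is a singular module: every element is annihilated by an essential left ideal. -/
def SingularMod (M : Type u) [AddCommGroup M] [Module S M] : Prop :=
  ∀ x : M, EssentialIn S (LinearMap.ker (LinearMap.toSpanSingleton S M x))

/-- `S` is (left) nonsingular: `Z(S) = 0`. -/
def NonsingularRing : Prop :=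
  ∀ r : S, EssentialIn S (LinearMap.ker (LinearMap.toSpanSingleton S S r)) → r = 0

/-- The socle of a module: the supremum of its simple submodules. -/
def socle (M : Type u) [AddCommGroup M] [Module S M] : Submodule S M :=
  sSup {N : Submodule S M | IsAtom N}

/-- von Neumann regular ring. -/
def IsVNR : Prop := ∀ a : S, ∃ r : S, a * r * a = a

/-- (left) V-ring: every simple module is injective. -/
def VRing : Prop :=
  ∀ (M : Type u) [AddCommGroup M] [Module S M], IsSimpleModule S M → InjMod S M

/-- (left) hereditary: every left ideal is projective. -/
def HereditaryRing : Prop := ∀ I : Submodule S S, Module.Projective S I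

/-- (left) semihereditary: every finitely generated left ideal is projective. -/
def SemihereditaryRing : Prop := ∀ I : Submodule S S, I.FG → Module.Projective S I

/-- (left) SI-ring: every singular module is injective. -/
def SIRing : Prop :=
  ∀ (M : Type u) [AddCommGroup M] [Module S M], SingularMod S M → InjMod S M

/-- quasi-Frobenius ring: two-sided Noetherian and self-injective. -/
def QFRing : Prop :=
  IsNoetherianRing S ∧ IsNoetherianRing Sᵐᵒᵖ ∧ InjMod S S ∧ InjMod Sᵐᵒᵖ S

/-- A module is uniserial if its submodules are totally ordered. -/
def Uniserial (M : Type u) [AddCommGroup M] [Module S M] : Prop :=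
  ∀ A B : Submodule S M, A ≤ B ∨ B ≤ A

/-- (left) serial ring: `S` is a finite direct sum of uniserial left ideals. -/
def SerialRing : Prop :=
  ∃ (n : ℕ) (f : Fin n → Submodule S S), (∀ i, Uniserial S (f i)) ∧
    iSupIndep f ∧ iSup f = ⊤

/-- (left) coherent: every finitely generated left ideal is finitely presented. -/
def CoherentRing : Prop := ∀ I : Submodule S S, I.FG → FPMod S I

/-- Indecomposable ring: no nontrivial central idempotents. -/
def IndecompRing : Prop :=
  Nontrivial S ∧ ∀ e : S, e * e = e → (∀ r : S, e * r = r * e) → e = 0 ∨ e = 1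

end Defs

/-! ### Auxiliary development for stmt_4 -/

section AuxBasic

variable (A : Type u) [Ring A]

theorem injMod_of_baer (Q : Type u) [AddCommGroup Q] [Module A Q] (h : Module.Baer A Q) :
    InjMod A Q := fun _N _ _ _K _ _ i hi f => h.extension_property i hi f

theorem subinjective_of_injMod (N M : Type u) [AddCommGroup N] [Module A N]
    [AddCommGroup M] [Module A M] (h : InjMod A N) : Subinjective A N M := by
  intro K _ _ i hi f
  obtain ⟨r, hr⟩ := h N K i hi LinearMap.id
  exact ⟨f ∘ₗ r, by rw [LinearMap.comp_assoc, hr, LinearMap.comp_id]⟩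

theorem injMod_pi {κ : Type} (Φ : κ → Type u) [∀ j, AddCommGroup (Φ j)]
    [∀ j, Module A (Φ j)] (h : ∀ j, InjMod A (Φ j)) : InjMod A (∀ j, Φ j) := by
  intro N _ _ K _ _ i hi f
  have H : ∀ j, ∃ g : K →ₗ[A] Φ j, g ∘ₗ i = (LinearMap.proj j) ∘ₗ f :=
    fun j => h j N K i hi ((LinearMap.proj j) ∘ₗ f)
  choose g hg using H
  refine ⟨LinearMap.pi g, ?_⟩
  apply LinearMap.ext; intro x; funext j
  exact LinearMap.congr_fun (hg j) x

end AuxBasic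

section AuxCoInd

variable (A : Type u) [Ring A] (D : Type u) [AddCommGroup D]

/-- Coinduced module `Hom_ℤ(A, D)` with `(c • f) a = f (a * c)`. -/
abbrev CoInd : Type u := A →+ D

instance CoInd.module : Module A (CoInd A D) where
  smul c f := f.comp (AddMonoidHom.mulRight c)
  one_smul f := AddMonoidHom.ext fun a => congrArg f (mul_one a)
  mul_smul c d f := AddMonoidHom.ext fun a =>
    show f (a * (c * d)) = f (a * c * d) from congrArg f (mul_assoc a c d).symm
  smul_zero c := rfl
  smul_add c f g := rfl
  add_smul c d f := AddMonoidHom.ext fun a =>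
    show f (a * (c + d)) = f (a * c) + f (a * d) by rw [mul_add, map_add]
  zero_smul f := AddMonoidHom.ext fun a =>
    show f (a * 0) = 0 by rw [mul_zero, map_zero]

lemma CoInd.smul_apply (c : A) (f : CoInd A D) (a : A) : (c • f) a = f (a * c) := rfl

theorem injMod_coInd (hD : Module.Baer ℤ D) : InjMod A (CoInd A D) := by
  intro N _ _ K _ _ i hi f
  let fbar : N →+ D :=
    { toFun := fun x => f x 1
      map_zero' := by simp
      map_add' := fun x y => by simp }
  obtain ⟨hbar, hh⟩ := Module.Baer.extension_property_addMonoidHom hD i.toAddMonoidHom hi fbar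
  refine ⟨{ toFun := fun y =>
            { toFun := fun a => hbar (a • y)
              map_zero' := by simp
              map_add' := fun a b =>
                show hbar ((a + b) • y) = hbar (a • y) + hbar (b • y) by
                  rw [add_smul, map_add] }
            map_add' := fun y z => AddMonoidHom.ext fun a =>
              show hbar (a • (y + z)) = hbar (a • y) + hbar (a • z) by rw [smul_add, map_add]
            map_smul' := fun c y => AddMonoidHom.ext fun a =>
              show hbar (a • c • y) = hbar ((a * c) • y) by rw [mul_smul] }, ?_⟩
  apply LinearMap.ext; intro x; apply AddMonoidHom.ext; intro a
  show hbar (a • i x) = f x a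
  rw [← map_smul i a x]
  have h1 : hbar (i (a • x)) = fbar (a • x) := DFunLike.congr_fun hh (a • x)
  rw [h1]
  show f (a • x) 1 = f x a
  rw [map_smul f a x, CoInd.smul_apply, one_mul]

/-- Linearization of an additive map into `D` to a linear map into the coinduced module. -/
def coIndEmb (M : Type u) [AddCommGroup M] [Module A M] (d : M →+ D) : M →ₗ[A] CoInd A D where
  toFun m :=
    { toFun := fun a => d (a • m)
      map_zero' := by simp
      map_add' := fun a b =>
        show d ((a + b) • m) = d (a • m) + d (b • m) by rw [add_smul, map_add] }
  map_add' m m' := AddMonoidHom.ext fun a =>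
    show d (a • (m + m')) = d (a • m) + d (a • m') by rw [smul_add, map_add]
  map_smul' c m := AddMonoidHom.ext fun a =>
    show d (a • c • m) = d ((a * c) • m) by rw [mul_smul]

theorem exists_injEmb (M : Type u) [AddCommGroup M] [Module A M] :
    ∃ (E : Type u) (_ : AddCommGroup E) (_ : Module A E) (e : M →ₗ[A] E),
      InjMod A E ∧ Function.Injective e := by
  classical
  let D : Type u := CharMod M → AddCircle (1 : ℚ)
  have hD : Module.Baer ℤ D := Module.Baer.of_divisible D
  let d : M →+ D :=
    { toFun := fun m => fun χ => χ m
      map_zero' := by funext χ; exact map_zero χ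
      map_add' := fun x y => by funext χ; exact map_add χ x y }
  have hd : Function.Injective d := by
    intro x y hxy
    by_contra hne
    have hsub : x - y ≠ 0 := sub_ne_zero.mpr hne
    obtain ⟨c, hc⟩ := CharacterModule.exists_character_apply_ne_zero_of_ne_zero hsub
    let χ : CharMod M := c
    have : χ x = χ y := congrFun hxy χ
    apply hc
    show χ (x - y) = 0
    rw [map_sub, this, sub_self]
  refine ⟨CoInd A D, inferInstance, CoInd.module A D, coIndEmb A D M d, injMod_coInd A D hD, ?_⟩
  intro x y hxy
  apply hd
  have h1 : d ((1 : A) • x) = d ((1 : A) • y) := DFunLike.congr_fun hxy (1 : A)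
  rwa [one_smul, one_smul] at h1

end AuxCoInd


section AuxTensor

variable (R : Type u) [Ring R] (G : Type u) [AddCommGroup G] [Module R G]

/-- Relations defining `M ⊗_R G` for a right module `M` and left module `G`. -/
def ttrel (M : Type u) [AddCommGroup M] [Module Rᵐᵒᵖ M] : Submodule ℤ (TensorProduct ℤ M G) :=
  Submodule.span ℤ {x | ∃ (m : M) (r : R) (g : G),
    x = (op r • m) ⊗ₜ[ℤ] g - m ⊗ₜ[ℤ] (r • g)}

/-- `M ⊗_R G`. -/
abbrev TT (M : Type u) [AddCommGroup M] [Module Rᵐᵒᵖ M] : Type u :=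
  TensorProduct ℤ M G ⧸ ttrel R G M

/-- Class of a simple tensor in `TT`. -/
noncomputable def ttmk (M : Type u) [AddCommGroup M] [Module Rᵐᵒᵖ M] (m : M) (g : G) : TT R G M :=
  Submodule.Quotient.mk (m ⊗ₜ[ℤ] g)

lemma ttmk_def (M : Type u) [AddCommGroup M] [Module Rᵐᵒᵖ M] (m : M) (g : G) :
    ttmk R G M m g = Submodule.Quotient.mk (m ⊗ₜ[ℤ] g) := rfl

/-- Functoriality of `TT` in the right-module variable. -/
noncomputable def ttmap {M B : Type u} [AddCommGroup M] [Module Rᵐᵒᵖ M] [AddCommGroup B]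
    [Module Rᵐᵒᵖ B] (h : M →ₗ[Rᵐᵒᵖ] B) : TT R G M →ₗ[ℤ] TT R G B :=
  Submodule.mapQ _ _ (TensorProduct.map h.toAddMonoidHom.toIntLinearMap LinearMap.id)
    (by
      rw [ttrel, Submodule.span_le]
      rintro x ⟨m, r, g, rfl⟩
      refine Submodule.mem_comap.mpr ?_
      erw [map_sub, TensorProduct.map_tmul, TensorProduct.map_tmul]
      simp only [LinearMap.id_apply, AddMonoidHom.coe_toIntLinearMap, LinearMap.toAddMonoidHom_coe]
      rw [map_smul]
      exact Submodule.subset_span ⟨h m, r, g, rfl⟩)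

lemma ttmap_mk {M B : Type u} [AddCommGroup M] [Module Rᵐᵒᵖ M] [AddCommGroup B]
    [Module Rᵐᵒᵖ B] (h : M →ₗ[Rᵐᵒᵖ] B) (m : M) (g : G) :
    ttmap R G h (ttmk R G M m g) = ttmk R G B (h m) g := by
  rw [ttmap, ttmk]
  erw [Submodule.mapQ_apply, TensorProduct.map_tmul]
  rfl

lemma ttmap_id {M : Type u} [AddCommGroup M] [Module Rᵐᵒᵖ M] (x : TT R G M) :
    ttmap R G (LinearMap.id : M →ₗ[Rᵐᵒᵖ] M) x = x := by
  obtain ⟨y, rfl⟩ := Submodule.Quotient.mk_surjective _ x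
  induction y using TensorProduct.induction_on with
  | zero => rw [Submodule.Quotient.mk_zero (p := ttrel R G M), map_zero]
  | tmul m g => exact ttmap_mk R G _ m g
  | add a b ha hb =>
      rw [Submodule.Quotient.mk_add (p := ttrel R G M), map_add, ha, hb]

lemma ttmap_comp {M B C : Type u} [AddCommGroup M] [Module Rᵐᵒᵖ M] [AddCommGroup B]
    [Module Rᵐᵒᵖ B] [AddCommGroup C] [Module Rᵐᵒᵖ C]
    (h₂ : B →ₗ[Rᵐᵒᵖ] C) (h₁ : M →ₗ[Rᵐᵒᵖ] B) (x : TT R G M) :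
    ttmap R G h₂ (ttmap R G h₁ x) = ttmap R G (h₂ ∘ₗ h₁) x := by
  obtain ⟨y, rfl⟩ := Submodule.Quotient.mk_surjective _ x
  induction y using TensorProduct.induction_on with
  | zero => rw [Submodule.Quotient.mk_zero (p := ttrel R G M), map_zero, map_zero, map_zero]
  | tmul m g => rw [show Submodule.Quotient.mk (m ⊗ₜ[ℤ] g) = ttmk R G M m g from rfl,
      ttmap_mk, ttmap_mk, ttmap_mk]; rfl
  | add a b ha hb =>
      rw [Submodule.Quotient.mk_add (p := ttrel R G M), map_add, map_add, map_add, ha, hb]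

variable {R G}

lemma charMod_smul_apply {M : Type u} [AddCommGroup M] [Module R M] (c : Rᵐᵒᵖ)
    (f : CharMod M) (y : M) : (c • f) y = f (unop c • y) := rfl

/-- A linear map into a character module gives a character of the tensor product. -/
noncomputable def toCharTensor {M : Type u} [AddCommGroup M] [Module Rᵐᵒᵖ M]
    (f : M →ₗ[Rᵐᵒᵖ] CharMod G) : TT R G M →ₗ[ℤ] AddCircle (1 : ℚ) :=
  Submodule.liftQ _
    (TensorProduct.liftAddHom (f.toAddMonoidHom)
      (fun z m g => by
        show f (z • m) g = f m (z • g)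
        rw [map_zsmul f z m, AddMonoidHom.smul_apply, map_zsmul])).toIntLinearMap
    (by
      rw [ttrel, Submodule.span_le]
      rintro x ⟨m, r, g, rfl⟩
      simp only [SetLike.mem_coe, LinearMap.mem_ker, AddMonoidHom.coe_toIntLinearMap, map_sub,
        TensorProduct.liftAddHom_tmul]
      show f (op r • m) g - f m (r • g) = 0
      rw [map_smul f (op r) m]
      show (op r • f m) g - f m (r • g) = 0
      rw [charMod_smul_apply, unop_op, sub_self])

lemma toCharTensor_mk {M : Type u} [AddCommGroup M] [Module Rᵐᵒᵖ M]
    (f : M →ₗ[Rᵐᵒᵖ] CharMod G) (m : M) (g : G) :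
    toCharTensor f (ttmk R G M m g) = f m g := by
  rw [toCharTensor, ttmk_def, Submodule.liftQ_apply]
  simp only [AddMonoidHom.coe_toIntLinearMap, TensorProduct.liftAddHom_tmul]
  rfl

/-- A character of the tensor product gives a linear map into the character module. -/
noncomputable def ofCharTensor {M : Type u} [AddCommGroup M] [Module Rᵐᵒᵖ M]
    (χ : TT R G M →+ AddCircle (1 : ℚ)) : M →ₗ[Rᵐᵒᵖ] CharMod G where
  toFun m :=
    { toFun := fun g => χ (ttmk R G M m g)
      map_zero' := by
        show χ (ttmk R G M m 0) = 0
        rw [ttmk_def, TensorProduct.tmul_zero,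
          Submodule.Quotient.mk_zero (p := ttrel R G M), map_zero]
      map_add' := fun g g' => by
        show χ (ttmk R G M m (g + g')) = χ (ttmk R G M m g) + χ (ttmk R G M m g')
        rw [ttmk_def, ttmk_def, ttmk_def, TensorProduct.tmul_add,
          Submodule.Quotient.mk_add (p := ttrel R G M), map_add] }
  map_add' m m' := AddMonoidHom.ext fun g =>
    show χ (ttmk R G M (m + m') g) = χ (ttmk R G M m g) + χ (ttmk R G M m' g) by
      rw [ttmk_def, ttmk_def, ttmk_def, TensorProduct.add_tmul,
        Submodule.Quotient.mk_add (p := ttrel R G M), map_add]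
  map_smul' c m := AddMonoidHom.ext fun g => by
    show χ (ttmk R G M (c • m) g) = χ (ttmk R G M m (unop c • g))
    congr 1
    rw [ttmk_def, ttmk_def, Submodule.Quotient.eq]
    exact Submodule.subset_span ⟨m, unop c, g, by rw [op_unop]⟩

/-- Along a "`G`-pure" monomorphism, maps into `G⁺` extend. -/
lemma extend_into_charMod {N K : Type u} [AddCommGroup N] [Module Rᵐᵒᵖ N] [AddCommGroup K]
    [Module Rᵐᵒᵖ K] (i : N →ₗ[Rᵐᵒᵖ] K) (hpure : Function.Injective (ttmap R G i))
    (f : N →ₗ[Rᵐᵒᵖ] CharMod G) : ∃ g : K →ₗ[Rᵐᵒᵖ] CharMod G, g ∘ₗ i = f := by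
  obtain ⟨χ', hχ'⟩ := Module.Baer.extension_property_addMonoidHom
    (Module.Baer.of_divisible _) (ttmap R G i).toAddMonoidHom hpure
    (toCharTensor f).toAddMonoidHom
  refine ⟨ofCharTensor χ', ?_⟩
  apply LinearMap.ext; intro x; apply AddMonoidHom.ext; intro g
  show χ' (ttmk R G K (i x) g) = f x g
  rw [← ttmap_mk R G i x g]
  have h1 : χ' (ttmap R G i (ttmk R G N x g)) = toCharTensor f (ttmk R G N x g) :=
    DFunLike.congr_fun hχ' (ttmk R G N x g)
  rw [h1, toCharTensor_mk]

end AuxTensor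


section AuxDirectSum

open DirectSum

variable (R : Type u) [Ring R] (E : ℕ → Type u) [∀ n, AddCommGroup (E n)]
  [∀ n, Module Rᵐᵒᵖ (E n)]

/-- Finite subproduct of a family. -/
abbrev PP (s : Finset ℕ) : Type u := ∀ j : {x // x ∈ s}, E j.1

/-- Inclusion of a finite subproduct into the direct sum. -/
noncomputable def inclP (s : Finset ℕ) : PP E s →ₗ[Rᵐᵒᵖ] ⨁ n, E n :=
  ∑ j ∈ s.attach, (DirectSum.lof Rᵐᵒᵖ ℕ E j.1).comp (LinearMap.proj j)

lemma inclP_apply (s : Finset ℕ) (p : PP E s) (n : ℕ) :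
    (inclP R E s p) n = if h : n ∈ s then p ⟨n, h⟩ else 0 := by
  classical
  rw [inclP, LinearMap.sum_apply]
  have h1 : (∑ j ∈ s.attach, ((DirectSum.lof Rᵐᵒᵖ ℕ E j.1).comp (LinearMap.proj j)) p) n
      = ∑ j ∈ s.attach, (DirectSum.lof Rᵐᵒᵖ ℕ E j.1 (p j)) n := by
    rw [DFinsupp.finset_sum_apply]
    rfl
  rw [h1]
  split
  case isTrue h =>
    rw [Finset.sum_eq_single ⟨n, h⟩]
    · rw [DirectSum.lof_eq_of, DirectSum.of_eq_same]
    · intro j _ hj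
      rw [DirectSum.lof_eq_of, DirectSum.of_eq_of_ne]
      intro hc
      exact hj (Subtype.ext hc.symm)
    · intro hc
      exact absurd (Finset.mem_attach s ⟨n, h⟩) hc
  case isFalse h =>
    apply Finset.sum_eq_zero
    intro j _
    rw [DirectSum.lof_eq_of, DirectSum.of_eq_of_ne]
    intro hc
    exact h (hc ▸ j.2)

lemma inclP_injective (s : Finset ℕ) : Function.Injective (inclP R E s) := by
  intro p q h
  funext j
  have h2 : (inclP R E s p) j.1 = (inclP R E s q) j.1 := by rw [h]
  rw [inclP_apply, inclP_apply, dif_pos j.2, dif_pos j.2] at h2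
  exact h2

/-- Extension by zero between finite subproducts. -/
def extP {s₁ s : Finset ℕ} (hs : s₁ ⊆ s) : PP E s₁ →ₗ[Rᵐᵒᵖ] PP E s where
  toFun p := fun j => if h : j.1 ∈ s₁ then p ⟨j.1, h⟩ else 0
  map_add' p q := by
    funext j
    by_cases h : j.1 ∈ s₁ <;> simp [h]
  map_smul' c p := by
    funext j
    by_cases h : j.1 ∈ s₁ <;> simp [h]

lemma inclP_extP {s₁ s : Finset ℕ} (hs : s₁ ⊆ s) (p : PP E s₁) :
    inclP R E s (extP R E hs p) = inclP R E s₁ p := by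
  classical
  apply DirectSum.ext
  intro n
  show (inclP R E s (extP R E hs p)) n = (inclP R E s₁ p) n
  rw [inclP_apply, inclP_apply]
  by_cases h1 : n ∈ s₁
  · rw [dif_pos (hs h1), dif_pos h1]
    simp [extP, h1]
  · rw [dif_neg h1]
    by_cases h2 : n ∈ s
    · rw [dif_pos h2]
      simp [extP, h1]
    · rw [dif_neg h2]

lemma exists_finset_tensor (G : Type u) [AddCommGroup G] [Module R G]
    (t : TensorProduct ℤ (⨁ n, E n) G) :
    ∃ (s : Finset ℕ) (x : TensorProduct ℤ (PP E s) G),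
      TensorProduct.map (inclP R E s).toAddMonoidHom.toIntLinearMap LinearMap.id x = t := by
  classical
  induction t using TensorProduct.induction_on with
  | zero => exact ⟨∅, 0, by rw [map_zero]⟩
  | tmul a g =>
      refine ⟨DFinsupp.support a, (fun j => a j.1) ⊗ₜ[ℤ] g, ?_⟩
      rw [TensorProduct.map_tmul]
      have ha : inclP R E (DFinsupp.support a) (fun j => a j.1) = a := by
        apply DirectSum.ext
        intro n
        show (inclP R E _ _) n = a n
        rw [inclP_apply]
        by_cases h : n ∈ DFinsupp.support a
        · rw [dif_pos h]
        · rw [dif_neg h]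
          exact (DFinsupp.notMem_support_iff.mp h).symm
      show (inclP R E (DFinsupp.support a) (fun j => a j.1)) ⊗ₜ[ℤ] (LinearMap.id g) = a ⊗ₜ[ℤ] g
      rw [ha]
      rfl
  | add t₁ t₂ h₁ h₂ =>
      obtain ⟨s₁, x₁, hx₁⟩ := h₁
      obtain ⟨s₂, x₂, hx₂⟩ := h₂
      refine ⟨s₁ ∪ s₂,
        TensorProduct.map (extP R E (Finset.subset_union_left (s₂ := s₂))).toAddMonoidHom.toIntLinearMap LinearMap.id x₁
        + TensorProduct.map (extP R E (Finset.subset_union_right (s₁ := s₁))).toAddMonoidHom.toIntLinearMap LinearMap.id x₂, ?_⟩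
      rw [map_add]
      have key : ∀ (s' : Finset ℕ) (hs : s' ⊆ s₁ ∪ s₂) (x : TensorProduct ℤ (PP E s') G),
          TensorProduct.map (inclP R E (s₁ ∪ s₂)).toAddMonoidHom.toIntLinearMap LinearMap.id
            (TensorProduct.map (extP R E hs).toAddMonoidHom.toIntLinearMap LinearMap.id x)
          = TensorProduct.map (inclP R E s').toAddMonoidHom.toIntLinearMap LinearMap.id x := by
        intro s' hs x
        induction x using TensorProduct.induction_on with
        | zero => rw [map_zero, map_zero, map_zero]
        | tmul p g =>
            rw [TensorProduct.map_tmul, TensorProduct.map_tmul, TensorProduct.map_tmul]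
            show (inclP R E (s₁ ∪ s₂) (extP R E hs p)) ⊗ₜ[ℤ] (LinearMap.id (LinearMap.id g))
              = (inclP R E s' p) ⊗ₜ[ℤ] (LinearMap.id g)
            rw [inclP_extP]
            rfl
        | add y₁ y₂ hy₁ hy₂ => rw [map_add, map_add, map_add, hy₁, hy₂]
      rw [key _ _ x₁, key _ _ x₂, hx₁, hx₂]

/-- A direct sum of injective modules is `G`-pure in every extension. -/
lemma ttmap_injective_of_directSum (G : Type u) [AddCommGroup G] [Module R G]
    {K : Type u} [AddCommGroup K] [Module Rᵐᵒᵖ K]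
    (hE : ∀ n, InjMod Rᵐᵒᵖ (E n))
    (i : (⨁ n, E n) →ₗ[Rᵐᵒᵖ] K) (hi : Function.Injective i) :
    Function.Injective (ttmap R G i) := by
  rw [injective_iff_map_eq_zero]
  intro z hz
  obtain ⟨y, rfl⟩ := Submodule.Quotient.mk_surjective _ z
  obtain ⟨s, x, hx⟩ := exists_finset_tensor R E G y
  have hzx : (Submodule.Quotient.mk y : TT R G (⨁ n, E n))
      = ttmap R G (inclP R E s) (Submodule.Quotient.mk x) := by
    rw [ttmap]
    erw [Submodule.mapQ_apply, hx]
  have hIP : InjMod Rᵐᵒᵖ (PP E s) := by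
    apply injMod_pi Rᵐᵒᵖ (fun j : {x // x ∈ s} => E j.1)
    intro j
    exact hE j.1
  have hinj2 : Function.Injective (i ∘ₗ inclP R E s) :=
    fun p q h => inclP_injective R E s (hi h)
  obtain ⟨ρ, hρ⟩ := hIP (PP E s) K (i ∘ₗ inclP R E s) hinj2 LinearMap.id
  have h0 : ttmap R G (i ∘ₗ inclP R E s) (Submodule.Quotient.mk x) = 0 := by
    rw [← ttmap_comp, ← hzx, hz]
  have hx0 : (Submodule.Quotient.mk x : TT R G (PP E s)) = 0 := by
    have h3 := congrArg (ttmap R G ρ) h0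
    rw [ttmap_comp, hρ, map_zero] at h3
    rw [← ttmap_id R G (M := PP E s) (Submodule.Quotient.mk x), h3]
  rw [hzx, hx0, map_zero]

end AuxDirectSum


section AuxSolve

variable {R : Type u} [Ring R]

/-- If maps into character modules of f.p. modules extend along `i`, then finite divisibility
systems solvable in `K` are solvable in `N`. -/
lemma solvability {N K : Type u} [AddCommGroup N] [Module Rᵐᵒᵖ N] [AddCommGroup K]
    [Module Rᵐᵒᵖ K] (i : N →ₗ[Rᵐᵒᵖ] K)
    (hext : ∀ (G : Type u) [AddCommGroup G] [Module R G], FPMod R G →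
      ∀ f : N →ₗ[Rᵐᵒᵖ] CharMod G, ∃ g : K →ₗ[Rᵐᵒᵖ] CharMod G, g ∘ₗ i = f)
    (nn : ℕ) (a : Fin nn → R) (k₀ : K) (v : Fin nn → N)
    (hsys : ∀ j, (op (a j)) • k₀ = i (v j)) :
    ∃ m : N, ∀ j, (op (a j)) • m = v j := by
  classical
  let μ : N →+ (Fin nn → N) :=
    { toFun := fun m => fun j => op (a j) • m
      map_zero' := by funext j; exact smul_zero _
      map_add' := fun x y => by funext j; exact smul_add _ x y }
  let D : Submodule ℤ (Fin nn → N) := LinearMap.range μ.toIntLinearMap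
  by_cases hv : v ∈ D
  · obtain ⟨m, hm⟩ := hv
    exact ⟨m, fun j => congrFun hm j⟩
  · exfalso
    have hne : (Submodule.Quotient.mk v : (Fin nn → N) ⧸ D) ≠ 0 := by
      intro h0
      exact hv ((Submodule.Quotient.mk_eq_zero D).mp h0)
    obtain ⟨c, hc⟩ := CharacterModule.exists_character_apply_ne_zero_of_ne_zero hne
    let χ : ((Fin nn → N) ⧸ D) →+ AddCircle (1 : ℚ) := c
    let mkD : (Fin nn → N) →ₗ[ℤ] ((Fin nn → N) ⧸ D) := D.mkQ
    have hχv : χ (mkD v) ≠ 0 := hc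
    let L : Submodule R (Fin nn → R) := Submodule.span R {a}
    let mkL : (Fin nn → R) →ₗ[R] ((Fin nn → R) ⧸ L) := L.mkQ
    have hfpG : FPMod R ((Fin nn → R) ⧸ L) :=
      ⟨nn, L, Submodule.fg_span_singleton a, ⟨LinearEquiv.refl R _⟩⟩
    -- the pairing N × (Fin nn → R) → ℚ/ℤ
    let θ : N → (Fin nn → R) →+ (Fin nn → N) := fun m =>
      { toFun := fun r => fun j => op (r j) • m
        map_zero' := by
          funext j
          show op ((0 : Fin nn → R) j) • m = (0 : Fin nn → N) j
          rw [Pi.zero_apply, op_zero, zero_smul, Pi.zero_apply]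
        map_add' := fun r r' => by
          funext j
          show op ((r + r') j) • m = ((fun j => op (r j) • m) + fun j => op (r' j) • m) j
          rw [Pi.add_apply, op_add, add_smul, Pi.add_apply] }
    have hLker : ∀ (m : N), ∀ x ∈ L.toAddSubgroup,
        (χ.comp (mkD.toAddMonoidHom.comp (θ m))) x = 0 := by
      intro m x hx
      obtain ⟨r, hr⟩ := Submodule.mem_span_singleton.mp hx
      have hθ : θ m x = μ (op r • m) := by
        funext j
        show op (x j) • m = op (a j) • (op r • m)
        rw [← hr, Pi.smul_apply, smul_eq_mul, op_mul, mul_smul]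
      show χ (mkD (θ m x)) = 0
      rw [hθ]
      have h8 : mkD (μ (op r • m)) = 0 := by
        rw [show mkD (μ (op r • m)) = Submodule.Quotient.mk (μ (op r • m)) from rfl,
          Submodule.Quotient.mk_eq_zero]
        exact ⟨op r • m, rfl⟩
      rw [h8, map_zero]
    let f0 : N → CharMod ((Fin nn → R) ⧸ L) := fun m =>
      QuotientAddGroup.lift L.toAddSubgroup (χ.comp (mkD.toAddMonoidHom.comp (θ m))) (hLker m)
    have hf0 : ∀ (m : N) (r : Fin nn → R), f0 m (mkL r) = χ (mkD (θ m r)) := fun _ _ => rfl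
    let f : N →ₗ[Rᵐᵒᵖ] CharMod ((Fin nn → R) ⧸ L) :=
      { toFun := f0
        map_add' := fun m m' => by
          apply AddMonoidHom.ext; intro y
          obtain ⟨r, rfl⟩ := Submodule.Quotient.mk_surjective L y
          show f0 (m + m') (mkL r) = f0 m (mkL r) + f0 m' (mkL r)
          rw [hf0, hf0, hf0]
          have h9 : θ (m + m') r = θ m r + θ m' r := by
            funext j
            exact smul_add _ m m'
          rw [h9, map_add, map_add]
        map_smul' := fun cc m => by
          apply AddMonoidHom.ext; intro y
          obtain ⟨r, rfl⟩ := Submodule.Quotient.mk_surjective L y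
          show f0 (cc • m) (mkL r) = (cc • f0 m) (mkL r)
          rw [charMod_smul_apply]
          have h10 : unop cc • (mkL r) = mkL (unop cc • r) := (map_smul mkL (unop cc) r).symm
          rw [h10, hf0, hf0]
          have h11 : θ (cc • m) r = θ m (unop cc • r) := by
            funext j
            show op (r j) • (cc • m) = op ((unop cc • r) j) • m
            rw [Pi.smul_apply, smul_eq_mul, op_mul, op_unop, mul_smul]
          rw [h11] }
    obtain ⟨g, hg⟩ := hext ((Fin nn → R) ⧸ L) hfpG f
    have hgv : ∀ j, f0 (v j) = g (i (v j)) := fun j => (LinearMap.congr_fun hg (v j)).symm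
    have key1 : χ (mkD v) = ∑ j, f0 (v j) (mkL (Pi.single j (1 : R))) := by
      have h4 : ∀ j : Fin nn, f0 (v j) (mkL (Pi.single j (1 : R)))
          = χ (mkD (Pi.single j (v j))) := by
        intro j
        rw [hf0]
        have h12 : θ (v j) (Pi.single j (1 : R)) = Pi.single j (v j) := by
          funext j'
          show op ((Pi.single j (1 : R) : Fin nn → R) j') • v j
            = (Pi.single j (v j) : Fin nn → N) j'
          by_cases h : j' = j
          · subst h
            rw [Pi.single_eq_same, Pi.single_eq_same, op_one, one_smul]
          · rw [Pi.single_eq_of_ne h, Pi.single_eq_of_ne h, op_zero, zero_smul]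
        rw [h12]
      calc χ (mkD v) = χ (mkD (∑ j, Pi.single j (v j))) := by rw [Finset.univ_sum_single]
        _ = ∑ j, χ (mkD (Pi.single j (v j))) := by rw [map_sum, map_sum]
        _ = ∑ j, f0 (v j) (mkL (Pi.single j (1 : R))) :=
            Finset.sum_congr rfl (fun j _ => (h4 j).symm)
    have key2 : ∀ j : Fin nn, f0 (v j) (mkL (Pi.single j (1 : R)))
        = g k₀ (mkL (Pi.single j (a j))) := by
      intro j
      rw [hgv j, ← hsys j, map_smul]
      rw [charMod_smul_apply, unop_op]
      have h5 : a j • (mkL (Pi.single j (1 : R)))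
          = mkL (a j • (Pi.single j (1 : R) : Fin nn → R)) := (map_smul mkL _ _).symm
      rw [h5]
      have h6 : a j • (Pi.single j (1 : R) : Fin nn → R) = Pi.single j (a j) := by
        funext j'
        rw [Pi.smul_apply]
        by_cases h : j' = j
        · subst h
          rw [Pi.single_eq_same, Pi.single_eq_same, smul_eq_mul, mul_one]
        · rw [Pi.single_eq_of_ne h, Pi.single_eq_of_ne h, smul_zero]
      rw [h6]
    have key3 : ∑ j, g k₀ (mkL (Pi.single j (a j))) = 0 := by
      rw [← map_sum, ← map_sum]
      rw [Finset.univ_sum_single (fun j => a j)]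
      have haL : (fun j => a j) ∈ L := by
        have : a ∈ L := Submodule.mem_span_singleton_self a
        exact this
      have h13 : mkL (fun j => a j) = 0 := by
        rw [show mkL (fun j => a j) = Submodule.Quotient.mk (fun j => a j) from rfl,
          Submodule.Quotient.mk_eq_zero]
        exact haL
      rw [h13, map_zero]
    apply hχv
    rw [key1, Finset.sum_congr rfl (fun j _ => key2 j), key3]

end AuxSolve


section AuxForward

variable {R : Type u} [Ring R]

/-- Dualizing a map of left modules gives a map of right character modules. -/
def charDual {G H : Type u} [AddCommGroup G] [Module R G] [AddCommGroup H] [Module R H]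
    (e : G →ₗ[R] H) : CharMod H →ₗ[Rᵐᵒᵖ] CharMod G where
  toFun c := c.comp e.toAddMonoidHom
  map_add' c c' := rfl
  map_smul' r c := by
    apply AddMonoidHom.ext; intro y
    show c (unop r • e y) = c (e (unop r • y))
    rw [map_smul e (unop r) y]

lemma hext_of_subinj {ι : Type u} (Γ : ι → Type u) [∀ i, AddCommGroup (Γ i)]
    [∀ i, Module R (Γ i)]
    (hcomplete : ∀ (F : Type u) [AddCommGroup F] [Module R F], FPMod R F →
      ∃ i, Nonempty (F ≃ₗ[R] Γ i))
    {N : Type u} [AddCommGroup N] [Module Rᵐᵒᵖ N]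
    (hsub : Subinjective Rᵐᵒᵖ N (∀ i, CharMod (Γ i)))
    {K : Type u} [AddCommGroup K] [Module Rᵐᵒᵖ K] (i : N →ₗ[Rᵐᵒᵖ] K)
    (hi : Function.Injective i)
    (G : Type u) [AddCommGroup G] [Module R G] (hfpG : FPMod R G)
    (f : N →ₗ[Rᵐᵒᵖ] CharMod G) : ∃ g : K →ₗ[Rᵐᵒᵖ] CharMod G, g ∘ₗ i = f := by
  classical
  obtain ⟨i₀, ⟨e⟩⟩ := hcomplete G hfpG
  let f' : N →ₗ[Rᵐᵒᵖ] (∀ i, CharMod (Γ i)) :=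
    (LinearMap.single Rᵐᵒᵖ (fun i => CharMod (Γ i)) i₀) ∘ₗ (charDual e.symm.toLinearMap) ∘ₗ f
  obtain ⟨h, hh⟩ := hsub K i hi f'
  refine ⟨(charDual e.toLinearMap) ∘ₗ (LinearMap.proj i₀) ∘ₗ h, ?_⟩
  apply LinearMap.ext; intro x; apply AddMonoidHom.ext; intro y
  have h1 : h (i x) = f' x := LinearMap.congr_fun hh x
  show (h (i x) i₀) (e y) = f x y
  rw [h1]
  show ((Pi.single i₀ (charDual e.symm.toLinearMap (f x)) : ∀ i, CharMod (Γ i)) i₀) (e y) = f x y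
  rw [Pi.single_eq_same]
  show f x (e.symm (e y)) = f x y
  rw [LinearEquiv.symm_apply_apply]

lemma baer_of_hext {N : Type u} [AddCommGroup N] [Module Rᵐᵒᵖ N]
    (hNoeth : IsNoetherianRing Rᵐᵒᵖ)
    (hext : ∀ (K : Type u) [AddCommGroup K] [Module Rᵐᵒᵖ K] (i : N →ₗ[Rᵐᵒᵖ] K),
      Function.Injective i → ∀ (G : Type u) [AddCommGroup G] [Module R G], FPMod R G →
      ∀ f : N →ₗ[Rᵐᵒᵖ] CharMod G, ∃ g : K →ₗ[Rᵐᵒᵖ] CharMod G, g ∘ₗ i = f) :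
    Module.Baer Rᵐᵒᵖ N := by
  intro I φ
  classical
  have hIfg : I.FG := (isNoetherianRing_iff.mp hNoeth).noetherian I
  obtain ⟨T, hT⟩ := hIfg
  let bb : Fin T.card → Rᵐᵒᵖ := fun j => (T.equivFin.symm j : Rᵐᵒᵖ)
  have hbT : ∀ j, (bb j) ∈ T := fun j => (T.equivFin.symm j).2
  have hbI : ∀ j, bb j ∈ I := fun j => by rw [← hT]; exact Submodule.subset_span (hbT j)
  let w : ↥I →ₗ[Rᵐᵒᵖ] (N × Rᵐᵒᵖ) := LinearMap.prod φ (-(I.subtype))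
  let W : Submodule Rᵐᵒᵖ (N × Rᵐᵒᵖ) := LinearMap.range w
  let iN : N →ₗ[Rᵐᵒᵖ] ((N × Rᵐᵒᵖ) ⧸ W) := W.mkQ ∘ₗ LinearMap.inl Rᵐᵒᵖ N Rᵐᵒᵖ
  have hiN : Function.Injective iN := by
    intro x y hxy
    have hmem : ((x : N), (0 : Rᵐᵒᵖ)) - (y, 0) ∈ W := by
      apply (Submodule.Quotient.eq W).mp
      exact hxy
    obtain ⟨z, hz⟩ := hmem
    have hz2 : -(z : Rᵐᵒᵖ) = 0 := by
      have h := congrArg Prod.snd hz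
      simpa [w] using h
    have hz0 : z = 0 := by
      apply Subtype.ext
      rw [ZeroMemClass.coe_zero]
      exact neg_eq_zero.mp hz2
    have hz1 : φ z = x - y := by
      have h := congrArg Prod.fst hz
      simpa [w] using h
    rw [hz0, map_zero] at hz1
    exact sub_eq_zero.mp hz1.symm
  let k₀ : (N × Rᵐᵒᵖ) ⧸ W := W.mkQ (0, 1)
  let v : Fin T.card → N := fun j => φ ⟨bb j, hbI j⟩
  have hsys : ∀ j, (op (unop (bb j))) • k₀ = iN (v j) := by
    intro j
    rw [op_unop]
    show W.mkQ (bb j • ((0 : N), (1 : Rᵐᵒᵖ))) = W.mkQ (v j, 0)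
    have h1 : bb j • ((0 : N), (1 : Rᵐᵒᵖ)) = ((0 : N), bb j) := by
      rw [Prod.smul_mk, smul_zero, smul_eq_mul, mul_one]
    rw [h1]
    apply (Submodule.Quotient.eq W).mpr
    refine ⟨-⟨bb j, hbI j⟩, ?_⟩
    have h2 : w (-⟨bb j, hbI j⟩) = (-(v j), bb j) := by
      rw [map_neg]
      show -(φ ⟨bb j, hbI j⟩, -(bb j)) = (-(v j), bb j)
      rw [Prod.neg_mk, neg_neg]
    rw [h2]
    show (-(v j), bb j) = ((0 : N), bb j) - (v j, 0)
    rw [Prod.mk_sub_mk, zero_sub, sub_zero]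
  obtain ⟨m, hm⟩ := solvability iN (fun G _ _ hfG f => hext _ iN hiN G hfG f)
    T.card (fun j => unop (bb j)) k₀ v hsys
  have hker : ∀ j, bb j • m = v j := fun j => by
    have := hm j
    rwa [op_unop] at this
  refine ⟨LinearMap.toSpanSingleton Rᵐᵒᵖ N m, ?_⟩
  intro x hx
  let σ : ↥I →ₗ[Rᵐᵒᵖ] N := ((LinearMap.toSpanSingleton Rᵐᵒᵖ N m) ∘ₗ I.subtype) - φ
  have hσ : ∀ y : ↥I, σ y = 0 := by
    intro y
    have hy : (y : Rᵐᵒᵖ) ∈ Submodule.map I.subtype (LinearMap.ker σ) := by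
      have hspan : I ≤ Submodule.map I.subtype (LinearMap.ker σ) := by
        conv_lhs => rw [← hT]
        apply Submodule.span_le.mpr
        intro t ht
        have hbj : bb (T.equivFin ⟨t, ht⟩) = t := by
          show ((T.equivFin.symm (T.equivFin ⟨t, ht⟩)) : Rᵐᵒᵖ) = t
          rw [Equiv.symm_apply_apply]
        have htI : t ∈ I := by rw [← hT]; exact Submodule.subset_span ht
        refine ⟨⟨t, htI⟩, ?_, rfl⟩
        show σ ⟨t, htI⟩ = 0
        show t • m - φ ⟨t, htI⟩ = 0
        have h3 : φ ⟨t, htI⟩ = v (T.equivFin ⟨t, ht⟩) := by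
          show φ ⟨t, htI⟩ = φ ⟨bb (T.equivFin ⟨t, ht⟩), hbI _⟩
          congr 1
          exact Subtype.ext hbj.symm
        rw [h3, ← hker (T.equivFin ⟨t, ht⟩), hbj]
        exact sub_self _
      exact hspan y.2
    obtain ⟨z, hzker, hzz⟩ := hy
    have hzy : z = y := Subtype.ext hzz
    rw [← hzy]
    exact hzker
  have h4 : σ ⟨x, hx⟩ = 0 := hσ ⟨x, hx⟩
  have h5 : x • m - φ ⟨x, hx⟩ = 0 := h4
  have h6 : x • m = φ ⟨x, hx⟩ := by rwa [sub_eq_zero] at h5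
  exact h6

end AuxForward


section AuxBack

open DirectSum

variable {R : Type u} [Ring R]

lemma not_injMod_directSum (f : ℕ →o Ideal Rᵐᵒᵖ)
    (hns : ∀ n, ∃ m, n ≤ m ∧ f n ≠ f m)
    (E : ℕ → Type u) [∀ n, AddCommGroup (E n)] [∀ n, Module Rᵐᵒᵖ (E n)]
    (e : ∀ n, (Rᵐᵒᵖ ⧸ f n) →ₗ[Rᵐᵒᵖ] E n) (he : ∀ n, Function.Injective (e n)) :
    ¬ InjMod Rᵐᵒᵖ (⨁ n, E n) := by
  classical
  intro hinj
  let I : Ideal Rᵐᵒᵖ := ⨆ n, f n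
  let c : ∀ n, Rᵐᵒᵖ →ₗ[Rᵐᵒᵖ] E n := fun n => (e n) ∘ₗ (f n).mkQ
  have hex : ∀ x : ↥I, ∃ k, (x : Rᵐᵒᵖ) ∈ f k := fun x =>
    (Submodule.mem_iSup_of_chain f (x : Rᵐᵒᵖ)).mp x.2
  have hc0 : ∀ (x : ↥I) (k : ℕ), Nat.find (hex x) ≤ k → c k (x : Rᵐᵒᵖ) = 0 := by
    intro x k hk
    have hmem : (x : Rᵐᵒᵖ) ∈ f k := f.monotone hk (Nat.find_spec (hex x))
    show e k ((f k).mkQ (x : Rᵐᵒᵖ)) = 0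
    rw [show (f k).mkQ (x : Rᵐᵒᵖ) = 0 from (Submodule.Quotient.mk_eq_zero _).mpr hmem, map_zero]
  let φfun : ↥I → ⨁ n, E n := fun x =>
    DirectSum.mk E (Finset.range (Nat.find (hex x) + 1)) (fun k => c k.1 (x : Rᵐᵒᵖ))
  have hcoord : ∀ (x : ↥I) (k : ℕ), (φfun x) k = c k (x : Rᵐᵒᵖ) := by
    intro x k
    by_cases h : k ∈ Finset.range (Nat.find (hex x) + 1)
    · exact DirectSum.mk_apply_of_mem h
    · rw [DirectSum.mk_apply_of_notMem h]
      have hk : Nat.find (hex x) ≤ k := by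
        rw [Finset.mem_range] at h
        omega
      rw [hc0 x k hk]
  let φ : ↥I →ₗ[Rᵐᵒᵖ] ⨁ n, E n :=
    { toFun := φfun
      map_add' := fun x y => by
        apply DirectSum.ext
        intro k
        show (φfun (x + y)) k = ((φfun x) + (φfun y)) k
        rw [DFinsupp.add_apply, hcoord, hcoord, hcoord]
        rw [show ((x + y : ↥I) : Rᵐᵒᵖ) = (x : Rᵐᵒᵖ) + (y : Rᵐᵒᵖ) from rfl, map_add]
      map_smul' := fun r x => by
        apply DirectSum.ext
        intro k
        show (φfun (r • x)) k = (r • (φfun x)) k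
        rw [DFinsupp.smul_apply, hcoord, hcoord]
        rw [show ((r • x : ↥I) : Rᵐᵒᵖ) = r • (x : Rᵐᵒᵖ) from rfl, map_smul] }
  obtain ⟨ψ, hψ⟩ := hinj (↥I) Rᵐᵒᵖ I.subtype (Submodule.injective_subtype I) φ
  let wv : ⨁ n, E n := ψ 1
  let nstar := (DFinsupp.support wv).sup _root_.id + 1
  have hw0 : wv nstar = 0 := by
    by_contra h0
    have h1 : nstar ∈ DFinsupp.support wv := DFinsupp.mem_support_iff.mpr h0
    have h2 : _root_.id nstar ≤ (DFinsupp.support wv).sup _root_.id := Finset.le_sup h1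
    have h2' : nstar ≤ (DFinsupp.support wv).sup id := h2
    omega
  obtain ⟨mm, hmm, hne⟩ := hns nstar
  have hle : f nstar ≤ f mm := f.monotone hmm
  have hnle : ¬ f mm ≤ f nstar := fun hcon => hne (le_antisymm hle hcon)
  obtain ⟨x, hxm, hxn⟩ := SetLike.not_le_iff_exists.mp hnle
  have hxI : x ∈ I := (Submodule.mem_iSup_of_chain f x).mpr ⟨mm, hxm⟩
  have h1 : φ ⟨x, hxI⟩ = ψ x := (LinearMap.congr_fun hψ ⟨x, hxI⟩).symm
  have h2 : ψ x = x • wv := by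
    have h3 : ψ (x • (1 : Rᵐᵒᵖ)) = x • ψ 1 := map_smul ψ x 1
    rwa [smul_eq_mul, mul_one] at h3
  have h3 : (φ ⟨x, hxI⟩) nstar = 0 := by
    rw [h1, h2, DFinsupp.smul_apply, hw0, smul_zero]
  have h4 : (φ ⟨x, hxI⟩) nstar = c nstar x := hcoord ⟨x, hxI⟩ nstar
  rw [h4] at h3
  have h5 : (f nstar).mkQ x = 0 := by
    apply he nstar
    rw [map_zero]
    exact h3
  exact hxn ((Submodule.Quotient.mk_eq_zero _).mp h5)

end AuxBack

theorem stmt_4 {R : Type u} [Ring R] (ι : Type u) (Γ : ι → Type u)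
    [∀ i, AddCommGroup (Γ i)] [∀ i, Module R (Γ i)]
    (hfp : ∀ i, FPMod R (Γ i))
    (hirr : ∀ i j, i ≠ j → IsEmpty (Γ i ≃ₗ[R] Γ j))
    (hcomplete : ∀ (F : Type u) [AddCommGroup F] [Module R F], FPMod R F →
      ∃ i, Nonempty (F ≃ₗ[R] Γ i)) :
    IsNoetherianRing Rᵐᵒᵖ ↔ Indigent Rᵐᵒᵖ (∀ i, CharMod (Γ i)) := by
  constructor
  · intro hNoeth
    intro N _ _
    constructor
    · intro hsub
      apply injMod_of_baer
      apply baer_of_hext hNoeth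
      intro K _ _ i hi G _ _ hfpG fmap
      exact hext_of_subinj Γ hcomplete hsub i hi G hfpG fmap
    · intro hinj
      exact subinjective_of_injMod _ _ _ hinj
  · intro hInd
    by_contra hnoeth
    have hmono : ¬ ∀ g : ℕ →o Submodule Rᵐᵒᵖ Rᵐᵒᵖ, ∃ n, ∀ m, n ≤ m → g n = g m := by
      intro hst
      exact hnoeth (isNoetherianRing_iff.mpr (monotone_stabilizes_iff_noetherian.mp hst))
    push_neg at hmono
    obtain ⟨f, hf⟩ := hmono
    choose Efn hgrp hmod ee hstuff using fun n => exists_injEmb Rᵐᵒᵖ (Rᵐᵒᵖ ⧸ f n)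
    letI : ∀ n, AddCommGroup (Efn n) := hgrp
    letI : ∀ n, Module Rᵐᵒᵖ (Efn n) := hmod
    have hsub : Subinjective Rᵐᵒᵖ (DirectSum ℕ (fun n => Efn n)) (∀ i, CharMod (Γ i)) := by
      intro K _ _ i hi fmap
      have hexti : ∀ j : ι, ∃ g : K →ₗ[Rᵐᵒᵖ] CharMod (Γ j),
          g ∘ₗ i = (LinearMap.proj j) ∘ₗ fmap := fun j =>
        extend_into_charMod i
          (ttmap_injective_of_directSum R Efn (Γ j) (fun n => (hstuff n).1) i hi) _
      choose g hg using hexti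
      refine ⟨LinearMap.pi g, ?_⟩
      apply LinearMap.ext; intro x; funext j
      exact LinearMap.congr_fun (hg j) x
    have hinj := (hInd _).mp hsub
    exact not_injMod_directSum f hf Efn ee (fun n => (hstuff n).2) hinj
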